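/- Let 0 < m ≤ L, α ≥ 0, and x* ∈ ℝⁿ. Let (f_k)_{k∈ℕ} be a sequence of differentiable functions f_k : ℝⁿ → ℝ, each m-strongly convex with L-Lipschitz continuous gradient and with ∇f_k(x*) = 0. Let ξ : ℕ → ℝⁿ satisfy ξ_{k+1} = ξ_k − α∇f_k(ξ_k) for all k. Then for all k ≥ 0, ‖ξ_k − x*‖ ≤ (max{|1 − αm|, |1 − αL|})^k · ‖ξ₀ − x*‖. -/

import Mathlib

open scoped RealInnerProductSpace

variable {E : Type*} [NormedAddCommGroup E] [InnerProductSpace ℝ E] [CompleteSpace E]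

lemma descent_lemma {f : E → ℝ} {f' : E → E} {L : ℝ}
    (hdiff : ∀ x, HasGradientAt f (f' x) x)
    (hlip : ∀ x y, ‖f' y - f' x‖ ≤ L * ‖y - x‖) (x y : E) :
    f y ≤ f x + ⟪f' x, y - x⟫ + L / 2 * ‖y - x‖ ^ 2 := by
  set d := y - x with hd
  set g : ℝ → ℝ := fun t => f (x + t • d) - t * ⟪f' x, d⟫ - L / 2 * t ^ 2 * ‖d‖ ^ 2 with hg
  have hderiv : ∀ t : ℝ, HasDerivAt g (⟪f' (x + t • d), d⟫ - ⟪f' x, d⟫ - L * t * ‖d‖ ^ 2) t := by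
    intro t
    have h1 : HasDerivAt (fun t : ℝ => x + t • d) d t := by
      simpa using ((hasDerivAt_id t).smul_const d).const_add x
    have h2 : HasDerivAt (fun t : ℝ => f (x + t • d)) ⟪f' (x + t • d), d⟫ t := by
      have := (hdiff (x + t • d)).hasFDerivAt.comp_hasDerivAt t h1
      exact this
    have h3 : HasDerivAt (fun t : ℝ => t * ⟪f' x, d⟫) ⟪f' x, d⟫ t := by
      simpa using (hasDerivAt_id t).mul_const (⟪f' x, d⟫ : ℝ)
    have h4 : HasDerivAt (fun t : ℝ => L / 2 * t ^ 2 * ‖d‖ ^ 2) (L * t * ‖d‖ ^ 2) t := by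
      have := ((hasDerivAt_pow 2 t).const_mul (L / 2)).mul_const (‖d‖ ^ 2)
      refine this.congr_deriv ?_
      ring
    exact (h2.sub h3).sub h4
  have hanti : AntitoneOn g (Set.Icc (0:ℝ) 1) := by
    apply antitoneOn_of_deriv_nonpos (convex_Icc 0 1)
    · exact fun t _ => (hderiv t).continuousAt.continuousWithinAt
    · exact fun t _ => (hderiv t).differentiableAt.differentiableWithinAt
    · intro t ht
      rw [interior_Icc] at ht
      rw [(hderiv t).deriv]
      have h5 := hlip x (x + t • d)
      have h6 : ‖x + t • d - x‖ = t * ‖d‖ := by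
        rw [add_sub_cancel_left, norm_smul, Real.norm_eq_abs, abs_of_pos ht.1]
      rw [h6] at h5
      have h7 : ⟪f' (x + t • d) - f' x, d⟫ ≤ ‖f' (x + t • d) - f' x‖ * ‖d‖ :=
        real_inner_le_norm _ _
      rw [inner_sub_left] at h7
      nlinarith [norm_nonneg d, norm_nonneg (f' (x + t • d) - f' x)]
  have key : g 1 ≤ g 0 := hanti (Set.left_mem_Icc.2 zero_le_one) (Set.right_mem_Icc.2 zero_le_one) zero_le_one
  have g0 : g 0 = f x := by simp [hg]
  have g1 : g 1 = f y - ⟪f' x, d⟫ - L / 2 * ‖d‖ ^ 2 := by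
    simp [hg, hd]
  rw [g0, g1] at key
  linarith

lemma coco {h : E → ℝ} {h' : E → E} {K : ℝ} (hK : 0 ≤ K)
    (hconv : ∀ x y, h x + ⟪h' x, y - x⟫ ≤ h y)
    (hdesc : ∀ x y, h y ≤ h x + ⟪h' x, y - x⟫ + K / 2 * ‖y - x‖ ^ 2)
    (x y : E) : ‖h' x - h' y‖ ^ 2 ≤ K * ⟪h' x - h' y, x - y⟫ := by
  -- key one-sided estimate
  have key : ∀ (x y : E) (t : ℝ),
      h x + ⟪h' x, y - x⟫ + (t - K * t ^ 2 / 2) * ‖h' x - h' y‖ ^ 2 ≤ h y := by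
    intro x y t
    set w := h' x - h' y with hw
    set z := y + t • w with hz
    have h1 := hconv x z
    have h2 := hdesc y z
    have e1 : z - x = (y - x) + t • w := by rw [hz]; abel
    have e2 : z - y = t • w := by rw [hz]; abel
    rw [e1, inner_add_right, real_inner_smul_right] at h1
    rw [e2, real_inner_smul_right] at h2
    have e3 : ‖z - y‖ ^ 2 = t ^ 2 * ‖w‖ ^ 2 := by
      rw [e2, norm_smul, Real.norm_eq_abs, mul_pow, sq_abs]
    rw [show ‖t • w‖ ^ 2 = t ^ 2 * ‖w‖ ^ 2 from by
      rw [norm_smul, Real.norm_eq_abs, mul_pow, sq_abs]] at h2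
    have e4 : ‖w‖ ^ 2 = ⟪h' x, w⟫ - ⟪h' y, w⟫ := by
      rw [← inner_sub_left, ← hw, real_inner_self_eq_norm_sq]
    have e8 : t * ⟪h' x, w⟫ - t * ⟪h' y, w⟫ - K / 2 * (t ^ 2 * ‖w‖ ^ 2)
        = (t - K * t ^ 2 / 2) * ‖w‖ ^ 2 := by rw [e4]; ring
    linarith [h1, h2, e8]
  rcases eq_or_lt_of_le hK with hK0 | hKpos
  · -- K = 0 : gradient difference must vanish
    have hw0 : ‖h' x - h' y‖ ^ 2 ≤ 0 := by
      by_contra hcon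
      push_neg at hcon
      set s := ‖h' x - h' y‖ ^ 2 with hsdef
      set c := h y - h x - ⟪h' x, y - x⟫ with hcdef
      have h1 := key x y ((c + 1) / s)
      rw [← hK0] at h1
      have h2 : ((c + 1) / s - 0 * ((c + 1) / s) ^ 2 / 2) * s = c + 1 := by
        field_simp
        ring
      rw [h2] at h1
      have h3 : h x + ⟪h' x, y - x⟫ + (c + 1) = h y + 1 := by rw [hcdef]; ring
      linarith
    rw [← hK0, zero_mul]
    exact hw0
  · have h1 := key x y (1 / K)
    have h2 := key y x (1 / K)
    rw [norm_sub_rev (h' y) (h' x)] at h2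
    have e5 : ⟪h' x - h' y, x - y⟫ = ⟪h' x, x - y⟫ - ⟪h' y, x - y⟫ := inner_sub_left _ _ _
    have e6 : ⟪h' x, y - x⟫ = -⟪h' x, x - y⟫ := by
      rw [← inner_neg_right]; congr 1; abel
    have e7 : ⟪h' y, x - y⟫ = -⟪h' y, y - x⟫ := by
      rw [← inner_neg_right]; congr 1; abel
    have hc : (1 / K - K * (1 / K) ^ 2 / 2) = 1 / (2 * K) := by
      field_simp; ring
    rw [hc] at h1 h2
    set s := ‖h' x - h' y‖ ^ 2 with hs
    have hsum : ⟪h' x, y - x⟫ + ⟪h' y, x - y⟫ + (1 / (2 * K)) * s + (1 / (2 * K)) * s ≤ 0 := by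
      linarith
    have h9 : (1 / (2 * K)) * s + (1 / (2 * K)) * s = s / K := by
      field_simp
      ring
    have hsum2 : s / K ≤ ⟪h' x, x - y⟫ - ⟪h' y, x - y⟫ := by linarith [e6]
    rw [div_le_iff₀ hKpos] at hsum2
    rw [e5]
    linarith

lemma step_contract {m L α : ℝ} (hm : 0 < m) (hmL : m ≤ L) (hα : 0 ≤ α) {e g : E}
    (hsec : ‖g - m • e‖ ^ 2 ≤ (L - m) * ⟪g - m • e, e⟫) :
    ‖e - α • g‖ ≤ max |1 - α * m| |1 - α * L| * ‖e‖ := by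
  set c := (m + L) / 2 with hcdef
  set r := (L - m) / 2 with hrdef
  have hr : 0 ≤ r := by rw [hrdef]; linarith
  have hball : ‖g - c • e‖ ≤ r * ‖e‖ := by
    have h1 : ‖g - c • e‖ ^ 2 ≤ (r * ‖e‖) ^ 2 := by
      have e1 : g - c • e = (g - m • e) - r • e := by
        rw [hcdef, hrdef]
        match_scalars <;> ring
      rw [e1, norm_sub_sq_real, real_inner_smul_right, norm_smul, Real.norm_eq_abs,
        abs_of_nonneg hr]
      have h2 : (L - m) = 2 * r := by rw [hrdef]; ring
      rw [h2] at hsec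
      nlinarith [hsec]
    have h3 := Real.sqrt_le_sqrt h1
    rwa [Real.sqrt_sq (norm_nonneg _), Real.sqrt_sq (mul_nonneg hr (norm_nonneg _))] at h3
  have hdecomp : e - α • g = (1 - α * c) • e - α • (g - c • e) := by
    match_scalars <;> ring
  have hcoef : |1 - α * c| + α * r ≤ max |1 - α * m| |1 - α * L| := by
    rcases le_total (α * c) 1 with hcase | hcase
    · have h1 : |1 - α * c| = 1 - α * c := abs_of_nonneg (by linarith)
      have h2 : 1 - α * c + α * r = 1 - α * m := by rw [hcdef, hrdef]; ring
      have h3 : α * m ≤ α * c := by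
        apply mul_le_mul_of_nonneg_left _ hα
        rw [hcdef]; linarith
      have h4 : (0:ℝ) ≤ 1 - α * m := by linarith
      rw [h1, h2]
      exact le_trans (le_abs_self _) (le_max_left _ _)
    · have h1 : |1 - α * c| = α * c - 1 := by
        rw [abs_of_nonpos (by linarith)]; ring
      have h2 : α * c - 1 + α * r = -(1 - α * L) := by rw [hcdef, hrdef]; ring
      rw [h1, h2]
      exact le_trans (neg_le_abs _) (le_max_right _ _)
  calc ‖e - α • g‖ = ‖(1 - α * c) • e - α • (g - c • e)‖ := by rw [← hdecomp]
    _ ≤ ‖(1 - α * c) • e‖ + ‖α • (g - c • e)‖ := norm_sub_le _ _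
    _ = |1 - α * c| * ‖e‖ + α * ‖g - c • e‖ := by
        rw [norm_smul, norm_smul, Real.norm_eq_abs, Real.norm_eq_abs, abs_of_nonneg hα]
    _ ≤ |1 - α * c| * ‖e‖ + α * (r * ‖e‖) :=
        add_le_add_right (mul_le_mul_of_nonneg_left hball hα) _
    _ = (|1 - α * c| + α * r) * ‖e‖ := by ring
    _ ≤ max |1 - α * m| |1 - α * L| * ‖e‖ :=
        mul_le_mul_of_nonneg_right hcoef (norm_nonneg e)

/-- Time-varying objectives: since the sector constraint is pointwise in time, the
gradient-descent rate bound max{|1 − αm|, |1 − αL|} holds even when the objective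
function varies arbitrarily from step to step, as long as each f_k is m-strongly
convex with L-Lipschitz gradient and common stationary point x*. -/
theorem stmt_11 {n : ℕ} (m L α : ℝ) (hm : 0 < m) (hmL : m ≤ L) (hα : 0 ≤ α)
    (xstar : EuclideanSpace ℝ (Fin n))
    (f : ℕ → EuclideanSpace ℝ (Fin n) → ℝ)
    (f' : ℕ → EuclideanSpace ℝ (Fin n) → EuclideanSpace ℝ (Fin n))
    (hdiff : ∀ k x, HasGradientAt (f k) (f' k x) x)
    (hsc : ∀ k x y, f k y ≥ f k x + ⟪f' k x, y - x⟫ + (m / 2) * ‖y - x‖ ^ 2)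
    (hlip : ∀ k x y, ‖f' k y - f' k x‖ ≤ L * ‖y - x‖)
    (hstar : ∀ k, f' k xstar = 0)
    (ξ : ℕ → EuclideanSpace ℝ (Fin n))
    (hξ : ∀ k, ξ (k + 1) = ξ k - α • f' k (ξ k)) :
    ∀ k : ℕ, ‖ξ k - xstar‖ ≤ (max |1 - α * m| |1 - α * L|) ^ k * ‖ξ 0 - xstar‖ := by
  set ρ := max |1 - α * m| |1 - α * L| with hρ
  have hρ0 : 0 ≤ ρ := le_trans (abs_nonneg _) (le_max_left _ _)
  -- sector condition for each step
  have hsec : ∀ k x, ‖f' k x - m • (x - xstar)‖ ^ 2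
      ≤ (L - m) * ⟪f' k x - m • (x - xstar), x - xstar⟫ := by
    intro k x
    set h : EuclideanSpace ℝ (Fin n) → ℝ := fun z => f k z - m / 2 * ‖z‖ ^ 2 with hhdef
    set h' : EuclideanSpace ℝ (Fin n) → EuclideanSpace ℝ (Fin n) :=
      fun z => f' k z - m • z with hh'def
    have hid : ∀ u v : EuclideanSpace ℝ (Fin n),
        m / 2 * ‖v - u‖ ^ 2 = m / 2 * ‖v‖ ^ 2 - m / 2 * ‖u‖ ^ 2 - ⟪m • u, v - u⟫ := by
      intro u v
      rw [real_inner_smul_left, inner_sub_right, norm_sub_sq_real, real_inner_self_eq_norm_sq,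
        real_inner_comm]
      ring
    have hconv : ∀ u v, h u + ⟪h' u, v - u⟫ ≤ h v := by
      intro u v
      have := hsc k u v
      simp only [hhdef, hh'def, inner_sub_left]
      have h2 := hid u v
      linarith
    have hdesc : ∀ u v, h v ≤ h u + ⟪h' u, v - u⟫ + (L - m) / 2 * ‖v - u‖ ^ 2 := by
      intro u v
      have h1 := descent_lemma (hdiff k) (hlip k) u v
      simp only [hhdef, hh'def, inner_sub_left]
      have h2 := hid u v
      have h3 : (L - m) / 2 * ‖v - u‖ ^ 2 = L / 2 * ‖v - u‖ ^ 2 - m / 2 * ‖v - u‖ ^ 2 := by ring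
      linarith
    have h4 := coco (by linarith : (0:ℝ) ≤ L - m) hconv hdesc x xstar
    have h5 : h' x - h' xstar = f' k x - m • (x - xstar) := by
      simp only [hh'def, hstar k]
      match_scalars <;> ring
    rwa [h5] at h4
  -- one-step contraction
  have hstep : ∀ k, ‖ξ (k + 1) - xstar‖ ≤ ρ * ‖ξ k - xstar‖ := by
    intro k
    have h1 : ξ (k + 1) - xstar = (ξ k - xstar) - α • f' k (ξ k) := by
      rw [hξ k]; abel
    rw [h1]
    exact step_contract hm hmL hα (hsec k (ξ k))
  intro k
  induction k with
  | zero => simp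
  | succ k ih =>
    calc ‖ξ (k + 1) - xstar‖ ≤ ρ * ‖ξ k - xstar‖ := hstep k
      _ ≤ ρ * (ρ ^ k * ‖ξ 0 - xstar‖) := mul_le_mul_of_nonneg_left ih hρ0
      _ = ρ ^ (k + 1) * ‖ξ 0 - xstar‖ := by ring
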